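/- arXiv:1603.04630 — 10 statements merged into one kernel-verified Lean document; each statement's English description precedes it below -/
import Mathlib

section
/- Let n, m, ι be finite types, S₀ : Matrix n m ℂ with S₀† * S₀ = 1, and (M_μ)_{μ∈ι} a family in Matrix n n ℂ with scalars λ_μ ∈ ℂ such that M_μ * S₀ = λ_μ • S₀ for every μ and Σ_μ M_μ† * M_μ = 1. For any L₁ : Matrix n n ℂ set A_μ := S₀† * M_μ * L₁ * S₀. Then for every ρ : Matrix m m ℂ, writing K := S₀ * ρ * S₀†, one has Σ_μ S₀† * M_μ * (L₁ * K * L₁† − (1/2) * (L₁† * L₁ * K + K * L₁† * L₁)) * M_μ† * S₀ = Σ_μ A_μ * ρ * A_μ† − (1/2) * ((S₀† * L₁† * L₁ * S₀) * ρ + ρ * (S₀† * L₁† * L₁ * S₀)). (Second part of Lemma 1: for a dissipative perturbation with jump operator L₁, the first-order slow dynamics is of Lindblad form with jump operators A_μ = S₀† M_μ L₁ S₀.) -/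
open Matrix

/-- Second part of Lemma 1: for a dissipative perturbation with jump operator `L₁`, the
first-order slow dynamics is of Lindblad form with jump operators `A_μ = S₀† M_μ L₁ S₀`. -/
theorem reduced_dissipator_lindblad {n m ι : Type*} [Fintype n] [Fintype m] [Fintype ι]
    [DecidableEq n] [DecidableEq m]
    (S₀ : Matrix n m ℂ) (hS₀ : S₀ᴴ * S₀ = 1)
    (M : ι → Matrix n n ℂ) (lam : ι → ℂ)
    (hMS : ∀ μ, M μ * S₀ = lam μ • S₀)
    (hTP : ∑ μ, (M μ)ᴴ * M μ = 1)
    (L₁ : Matrix n n ℂ) (ρ : Matrix m m ℂ) :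
    ∑ μ, S₀ᴴ * M μ *
        (L₁ * (S₀ * ρ * S₀ᴴ) * L₁ᴴ
          - (1 / 2 : ℂ) • (L₁ᴴ * L₁ * (S₀ * ρ * S₀ᴴ) + (S₀ * ρ * S₀ᴴ) * L₁ᴴ * L₁))
        * (M μ)ᴴ * S₀
      = (∑ μ, (S₀ᴴ * M μ * L₁ * S₀) * ρ * (S₀ᴴ * M μ * L₁ * S₀)ᴴ)
        - (1 / 2 : ℂ) • ((S₀ᴴ * L₁ᴴ * L₁ * S₀) * ρ + ρ * (S₀ᴴ * L₁ᴴ * L₁ * S₀)) := by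
  have hMS' : ∀ μ, S₀ᴴ * (M μ)ᴴ = (star (lam μ)) • S₀ᴴ := fun μ => by
    rw [← conjTranspose_mul, hMS, conjTranspose_smul]
  have hSMS : ∀ μ, S₀ᴴ * M μ * S₀ = lam μ • (1 : Matrix m m ℂ) := fun μ => by
    rw [Matrix.mul_assoc, hMS, Matrix.mul_smul, hS₀]
  have hSMS' : ∀ μ, S₀ᴴ * ((M μ)ᴴ * S₀) = (star (lam μ)) • (1 : Matrix m m ℂ) :=
    fun μ => by rw [← Matrix.mul_assoc, hMS', Matrix.smul_mul, hS₀]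
  have hkey : ∑ μ, lam μ • ((M μ)ᴴ * S₀) = S₀ := by
    have h := congrArg (fun A => A * S₀) hTP
    simp only [Matrix.sum_mul, Matrix.one_mul] at h
    conv_rhs => rw [← h]
    refine Finset.sum_congr rfl fun μ _ => ?_
    rw [Matrix.mul_assoc, hMS, Matrix.mul_smul]
  have hkey' : ∑ μ, (star (lam μ)) • (S₀ᴴ * M μ) = S₀ᴴ := by
    have h := congrArg conjTranspose hkey
    simpa [conjTranspose_sum, conjTranspose_smul, conjTranspose_mul] using h
  have E1 : ∀ μ, S₀ᴴ * M μ * (L₁ * (S₀ * ρ * S₀ᴴ) * L₁ᴴ) * (M μ)ᴴ * S₀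
      = (S₀ᴴ * M μ * L₁ * S₀) * ρ * (S₀ᴴ * M μ * L₁ * S₀)ᴴ := fun μ => by
    simp only [conjTranspose_mul, conjTranspose_conjTranspose, Matrix.mul_assoc]
  have E2 : ∑ μ, S₀ᴴ * M μ * (L₁ᴴ * L₁ * (S₀ * ρ * S₀ᴴ)) * (M μ)ᴴ * S₀
      = (S₀ᴴ * L₁ᴴ * L₁ * S₀) * ρ := by
    have step : ∀ μ, S₀ᴴ * M μ * (L₁ᴴ * L₁ * (S₀ * ρ * S₀ᴴ)) * (M μ)ᴴ * S₀
        = ((star (lam μ)) • (S₀ᴴ * M μ)) * (L₁ᴴ * (L₁ * (S₀ * ρ))) := fun μ => by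
      simp only [Matrix.mul_assoc, hSMS', Matrix.smul_mul, Matrix.mul_smul, Matrix.mul_one]
    rw [Finset.sum_congr rfl fun μ _ => step μ, ← Matrix.sum_mul, hkey']
    simp only [Matrix.mul_assoc]
  have E3 : ∑ μ, S₀ᴴ * M μ * ((S₀ * ρ * S₀ᴴ) * L₁ᴴ * L₁) * (M μ)ᴴ * S₀
      = ρ * (S₀ᴴ * L₁ᴴ * L₁ * S₀) := by
    have step : ∀ μ, S₀ᴴ * M μ * ((S₀ * ρ * S₀ᴴ) * L₁ᴴ * L₁) * (M μ)ᴴ * S₀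
        = (ρ * (S₀ᴴ * L₁ᴴ * L₁)) * (lam μ • ((M μ)ᴴ * S₀)) := fun μ => by
      rw [show S₀ᴴ * M μ * ((S₀ * ρ * S₀ᴴ) * L₁ᴴ * L₁) * (M μ)ᴴ * S₀
          = (S₀ᴴ * M μ * S₀) * (ρ * (S₀ᴴ * L₁ᴴ * L₁) * ((M μ)ᴴ * S₀)) by
        simp only [Matrix.mul_assoc], hSMS]
      simp only [Matrix.smul_mul, Matrix.mul_smul, Matrix.one_mul, Matrix.mul_assoc]
    rw [Finset.sum_congr rfl fun μ _ => step μ, ← Matrix.mul_sum, hkey]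
    simp only [Matrix.mul_assoc]
  calc
    ∑ μ, S₀ᴴ * M μ *
        (L₁ * (S₀ * ρ * S₀ᴴ) * L₁ᴴ
          - (1 / 2 : ℂ) • (L₁ᴴ * L₁ * (S₀ * ρ * S₀ᴴ) + (S₀ * ρ * S₀ᴴ) * L₁ᴴ * L₁))
        * (M μ)ᴴ * S₀
      = ∑ μ, (S₀ᴴ * M μ * (L₁ * (S₀ * ρ * S₀ᴴ) * L₁ᴴ) * (M μ)ᴴ * S₀
          - (1 / 2 : ℂ) • (S₀ᴴ * M μ * (L₁ᴴ * L₁ * (S₀ * ρ * S₀ᴴ)) * (M μ)ᴴ * S₀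
            + S₀ᴴ * M μ * ((S₀ * ρ * S₀ᴴ) * L₁ᴴ * L₁) * (M μ)ᴴ * S₀)) := by
        refine Finset.sum_congr rfl fun μ _ => ?_
        simp only [Matrix.mul_sub, Matrix.sub_mul, Matrix.mul_add, Matrix.add_mul,
          Matrix.mul_smul, Matrix.smul_mul, smul_add]
    _ = (∑ μ, S₀ᴴ * M μ * (L₁ * (S₀ * ρ * S₀ᴴ) * L₁ᴴ) * (M μ)ᴴ * S₀)
          - (1 / 2 : ℂ) • ((∑ μ, S₀ᴴ * M μ * (L₁ᴴ * L₁ * (S₀ * ρ * S₀ᴴ)) * (M μ)ᴴ * S₀)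
            + ∑ μ, S₀ᴴ * M μ * ((S₀ * ρ * S₀ᴴ) * L₁ᴴ * L₁) * (M μ)ᴴ * S₀) := by
        rw [Finset.sum_sub_distrib, ← Finset.smul_sum, Finset.sum_add_distrib]
    _ = _ := by
        rw [Finset.sum_congr rfl fun μ _ => E1 μ, E2, E3]
end

section
/- Let n, m, ι be finite types, S₀ : Matrix n m ℂ with S₀† * S₀ = 1, and (M_μ)_{μ∈ι} a family in Matrix n n ℂ; define R : Matrix n n ℂ → Matrix n n ℂ by R(A) = Σ_μ M_μ * A * M_μ†. Let 𝓛₀, 𝓛₁ be linear endomorphisms of Matrix n n ℂ such that R(𝓛₀(A)) = 0 for all A, and R(S₀ * σ * S₀†) = S₀ * σ * S₀† for all σ : Matrix m m ℂ. If linear maps K₁ : Matrix m m ℂ → Matrix n n ℂ and 𝓛_{s,1} : Matrix m m ℂ → Matrix m m ℂ satisfy the first-order invariance condition 𝓛₀(K₁(ρ)) + 𝓛₁(S₀ * ρ * S₀†) = S₀ * 𝓛_{s,1}(ρ) * S₀† for all ρ, then 𝓛_{s,1}(ρ) = S₀† * R(𝓛₁(S₀ * ρ * S₀†)) * S₀ for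 all ρ. (Projection formula for the first-order slow generator, from the proof of Lemma 1.) -/
open Matrix

/-- Projection formula for the first-order slow generator (proof of Lemma 1): if `K₁` and
`𝓛_{s,1}` satisfy the first-order invariance condition, then
`𝓛_{s,1}(ρ) = S₀† R(𝓛₁(S₀ ρ S₀†)) S₀`. -/
theorem first_order_projection_formula {n m ι : Type*} [Fintype n] [Fintype m] [Fintype ι]
    [DecidableEq n] [DecidableEq m]
    (S₀ : Matrix n m ℂ) (hS₀ : S₀ᴴ * S₀ = 1)
    (M : ι → Matrix n n ℂ)
    (𝓛₀ 𝓛₁ : Matrix n n ℂ →ₗ[ℂ] Matrix n n ℂ)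
    (hR𝓛₀ : ∀ A : Matrix n n ℂ, ∑ μ, M μ * 𝓛₀ A * (M μ)ᴴ = 0)
    (hRK₀ : ∀ σ : Matrix m m ℂ, ∑ μ, M μ * (S₀ * σ * S₀ᴴ) * (M μ)ᴴ = S₀ * σ * S₀ᴴ)
    (K₁ : Matrix m m ℂ →ₗ[ℂ] Matrix n n ℂ)
    (𝓛s₁ : Matrix m m ℂ →ₗ[ℂ] Matrix m m ℂ)
    (hinv : ∀ ρ : Matrix m m ℂ,
      𝓛₀ (K₁ ρ) + 𝓛₁ (S₀ * ρ * S₀ᴴ) = S₀ * 𝓛s₁ ρ * S₀ᴴ)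
    (ρ : Matrix m m ℂ) :
    𝓛s₁ ρ = S₀ᴴ * (∑ μ, M μ * 𝓛₁ (S₀ * ρ * S₀ᴴ) * (M μ)ᴴ) * S₀ := by
  have key : ∑ μ, M μ * 𝓛₁ (S₀ * ρ * S₀ᴴ) * (M μ)ᴴ = S₀ * 𝓛s₁ ρ * S₀ᴴ := by
    have h1 : ∑ μ, M μ * (𝓛₀ (K₁ ρ) + 𝓛₁ (S₀ * ρ * S₀ᴴ)) * (M μ)ᴴ
        = S₀ * 𝓛s₁ ρ * S₀ᴴ := by
      rw [hinv ρ]; exact hRK₀ (𝓛s₁ ρ)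
    have h2 : ∑ μ, M μ * (𝓛₀ (K₁ ρ) + 𝓛₁ (S₀ * ρ * S₀ᴴ)) * (M μ)ᴴ
        = (∑ μ, M μ * 𝓛₀ (K₁ ρ) * (M μ)ᴴ)
          + ∑ μ, M μ * 𝓛₁ (S₀ * ρ * S₀ᴴ) * (M μ)ᴴ := by
      rw [← Finset.sum_add_distrib]
      congr 1; ext μ; rw [mul_add, add_mul]
    rw [h2, hR𝓛₀, zero_add] at h1
    exact h1
  rw [key]; symm
  calc S₀ᴴ * (S₀ * 𝓛s₁ ρ * S₀ᴴ) * S₀ = (S₀ᴴ * S₀) * 𝓛s₁ ρ * (S₀ᴴ * S₀) := by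
        simp [Matrix.mul_assoc]
    _ = 𝓛s₁ ρ := by rw [hS₀]; simp
end

section
/- Let n, m be finite types, S₀ : Matrix n m ℂ with S₀† * S₀ = 1, P₀ := S₀ * S₀†, and L₀ : Matrix n n ℂ with L₀ * S₀ = 0. Let X : Matrix n n ℂ be Hermitian with L₀† * L₀ * X = 1 − P₀, X * (L₀† * L₀) = 1 − P₀, X * P₀ = 0 and P₀ * X = 0. Let H₁ : Matrix n n ℂ be Hermitian, set C₁ := 2 * X * H₁ * P₀ + 2 * P₀ * H₁ * X, and for ρ : Matrix m m ℂ set K₁(ρ) := −i * (C₁ * (S₀ * ρ * S₀†) − (S₀ * ρ * S₀†) * C₁). Then L₀ * K₁(ρ) * L₀† − (1/2) * (L₀† * L₀ * K₁(ρ) + K₁(ρ) * L₀† * L₀) = −i * ((P₀ * H₁ * P₀ − H₁) * (S₀ * ρ * S₀†) − (S₀ * ρ * S₀†) * (P₀ * H₁ * P₀ − H₁)). (Lemma 2: K₁ and the Zeno generator 𝓛_{s,1}(ρ) = −i[S₀†H₁S₀, ρ] solve the first-order invariance equation.) -/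
open Matrix Complex

/-- Lemma 2: `K₁(ρ) = −i[C₁, S₀ρS₀†]` with `C₁ = 2(L₀†L₀)⁻¹H₁P₀ + 2P₀H₁(L₀†L₀)⁻¹`, together
with the Zeno generator `𝓛_{s,1}(ρ) = −i[S₀†H₁S₀, ρ]`, solve the first-order invariance
equation. -/
theorem K1_solves_first_order_invariance {n m : Type*} [Fintype n] [Fintype m]
    [DecidableEq n] [DecidableEq m]
    (S₀ : Matrix n m ℂ) (hS₀ : S₀ᴴ * S₀ = 1)
    (L₀ : Matrix n n ℂ) (hL₀S₀ : L₀ * S₀ = 0)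
    (X : Matrix n n ℂ) (hX : Xᴴ = X)
    (hXinv : L₀ᴴ * L₀ * X = 1 - S₀ * S₀ᴴ)
    (hXinv' : X * (L₀ᴴ * L₀) = 1 - S₀ * S₀ᴴ)
    (hXP₀ : X * (S₀ * S₀ᴴ) = 0) (hP₀X : (S₀ * S₀ᴴ) * X = 0)
    (H₁ : Matrix n n ℂ) (hH₁ : H₁ᴴ = H₁)
    (ρ : Matrix m m ℂ) :
    (let P₀ := S₀ * S₀ᴴ
     let C₁ := 2 • (X * H₁ * P₀) + 2 • (P₀ * H₁ * X)
     let K₁ := (-Complex.I) • (C₁ * (S₀ * ρ * S₀ᴴ) - (S₀ * ρ * S₀ᴴ) * C₁)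
     L₀ * K₁ * L₀ᴴ - (1 / 2 : ℂ) • (L₀ᴴ * L₀ * K₁ + K₁ * (L₀ᴴ * L₀))
       = (-Complex.I) • ((P₀ * H₁ * P₀ - H₁) * (S₀ * ρ * S₀ᴴ)
           - (S₀ * ρ * S₀ᴴ) * (P₀ * H₁ * P₀ - H₁))) := by
  have hS₀L : S₀ᴴ * L₀ᴴ = 0 := by
    have h := congrArg conjTranspose hL₀S₀
    simpa [conjTranspose_mul] using h
  have hXS : X * S₀ = 0 := by
    have h := congrArg (· * S₀) hXP₀
    simpa [Matrix.mul_assoc, hS₀] using h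
  have hSX : S₀ᴴ * X = 0 := by
    have h := congrArg (S₀ᴴ * ·) hP₀X
    simpa [← Matrix.mul_assoc, hS₀] using h
  simp only []
  set r := S₀ * ρ * S₀ᴴ with hrdef
  have hr1 : L₀ * r = 0 := by
    rw [hrdef, ← Matrix.mul_assoc, ← Matrix.mul_assoc, hL₀S₀, Matrix.zero_mul,
      Matrix.zero_mul]
  have hr2 : r * L₀ᴴ = 0 := by
    rw [hrdef, Matrix.mul_assoc, hS₀L, Matrix.mul_zero]
  have hr3 : X * r = 0 := by
    rw [hrdef, ← Matrix.mul_assoc, ← Matrix.mul_assoc, hXS, Matrix.zero_mul,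
      Matrix.zero_mul]
  have hr4 : r * X = 0 := by
    rw [hrdef, Matrix.mul_assoc, hSX, Matrix.mul_zero]
  have hr5 : S₀ * S₀ᴴ * r = r := by
    have h := congrArg (fun M => S₀ * M * ρ * S₀ᴴ) hS₀
    simpa [hrdef, Matrix.mul_assoc] using h
  have hr6 : r * (S₀ * S₀ᴴ) = r := by
    have h := congrArg (fun M => S₀ * ρ * M * S₀ᴴ) hS₀
    simpa [hrdef, Matrix.mul_assoc] using h
  have hrLL : r * (L₀ᴴ * L₀) = 0 := by
    rw [← Matrix.mul_assoc, hr2, Matrix.zero_mul]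
  -- simplify C₁ * r and r * C₁
  have hCr : (2 • (X * H₁ * (S₀ * S₀ᴴ)) + 2 • ((S₀ * S₀ᴴ) * H₁ * X)) * r
      = 2 • (X * H₁ * r) := by
    rw [Matrix.add_mul, Matrix.smul_mul, Matrix.smul_mul,
      Matrix.mul_assoc (X * H₁) (S₀ * S₀ᴴ) r, hr5,
      Matrix.mul_assoc (S₀ * S₀ᴴ * H₁) X r, hr3, Matrix.mul_zero, smul_zero, add_zero]
  have hrC : r * (2 • (X * H₁ * (S₀ * S₀ᴴ)) + 2 • ((S₀ * S₀ᴴ) * H₁ * X))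
      = 2 • (r * H₁ * X) := by
    rw [Matrix.mul_add, Matrix.mul_smul, Matrix.mul_smul,
      ← Matrix.mul_assoc r (X * H₁) (S₀ * S₀ᴴ), ← Matrix.mul_assoc r X H₁, hr4,
      Matrix.zero_mul, Matrix.zero_mul, smul_zero, zero_add,
      ← Matrix.mul_assoc r (S₀ * S₀ᴴ * H₁) X, ← Matrix.mul_assoc r (S₀ * S₀ᴴ) H₁, hr6]
  rw [hCr, hrC]
  -- the three pieces
  have k1 : L₀ * ((-Complex.I) • (2 • (X * H₁ * r) - 2 • (r * H₁ * X))) * L₀ᴴ = 0 := by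
    have e1 : L₀ * (X * H₁ * r) * L₀ᴴ = 0 := by
      rw [Matrix.mul_assoc L₀ (X * H₁ * r) L₀ᴴ, Matrix.mul_assoc (X * H₁) r L₀ᴴ, hr2,
        Matrix.mul_zero, Matrix.mul_zero]
    have e2 : L₀ * (r * H₁ * X) * L₀ᴴ = 0 := by
      rw [← Matrix.mul_assoc L₀ (r * H₁) X, ← Matrix.mul_assoc L₀ r H₁, hr1,
        Matrix.zero_mul, Matrix.zero_mul, Matrix.zero_mul]
    rw [Matrix.mul_smul, Matrix.smul_mul, Matrix.mul_sub, Matrix.sub_mul,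
      Matrix.mul_smul, Matrix.smul_mul, Matrix.mul_smul, Matrix.smul_mul, e1, e2,
      smul_zero, sub_self, smul_zero]
  have k2 : L₀ᴴ * L₀ * ((-Complex.I) • (2 • (X * H₁ * r) - 2 • (r * H₁ * X)))
      = (-Complex.I) • (2 • ((1 - S₀ * S₀ᴴ) * (H₁ * r))) := by
    have e1 : L₀ᴴ * L₀ * (X * H₁ * r) = (1 - S₀ * S₀ᴴ) * (H₁ * r) := by
      rw [Matrix.mul_assoc X H₁ r, ← Matrix.mul_assoc (L₀ᴴ * L₀) X (H₁ * r), hXinv]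
    have e2 : L₀ᴴ * L₀ * (r * H₁ * X) = 0 := by
      rw [← Matrix.mul_assoc (L₀ᴴ * L₀) (r * H₁) X, ← Matrix.mul_assoc (L₀ᴴ * L₀) r H₁,
        Matrix.mul_assoc L₀ᴴ L₀ r, hr1, Matrix.mul_zero, Matrix.zero_mul,
        Matrix.zero_mul]
    rw [Matrix.mul_smul, Matrix.mul_sub, Matrix.mul_smul, Matrix.mul_smul, e1, e2,
      smul_zero, sub_zero]
  have k3 : ((-Complex.I) • (2 • (X * H₁ * r) - 2 • (r * H₁ * X))) * (L₀ᴴ * L₀)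
      = Complex.I • (2 • (r * H₁ * (1 - S₀ * S₀ᴴ))) := by
    have e1 : (X * H₁ * r) * (L₀ᴴ * L₀) = 0 := by
      rw [Matrix.mul_assoc (X * H₁) r (L₀ᴴ * L₀), hrLL, Matrix.mul_zero]
    have e2 : (r * H₁ * X) * (L₀ᴴ * L₀) = r * H₁ * (1 - S₀ * S₀ᴴ) := by
      rw [Matrix.mul_assoc (r * H₁) X (L₀ᴴ * L₀), hXinv']
    rw [Matrix.smul_mul, Matrix.sub_mul, Matrix.smul_mul, Matrix.smul_mul, e1, e2,
      smul_zero, zero_sub, smul_neg, neg_smul, neg_neg]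
  rw [k1, k2, k3]
  -- right-hand side simplification
  have hR1 : (S₀ * S₀ᴴ * H₁ * (S₀ * S₀ᴴ) - H₁) * r
      = S₀ * S₀ᴴ * (H₁ * r) - H₁ * r := by
    rw [Matrix.sub_mul, Matrix.mul_assoc (S₀ * S₀ᴴ * H₁) (S₀ * S₀ᴴ) r, hr5,
      Matrix.mul_assoc (S₀ * S₀ᴴ) H₁ r]
  have hR2 : r * (S₀ * S₀ᴴ * H₁ * (S₀ * S₀ᴴ) - H₁)
      = r * H₁ * (S₀ * S₀ᴴ) - r * H₁ := by
    rw [Matrix.mul_sub, ← Matrix.mul_assoc r (S₀ * S₀ᴴ * H₁) (S₀ * S₀ᴴ),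
      ← Matrix.mul_assoc r (S₀ * S₀ᴴ) H₁, hr6 ]
  have q1 : (1 - S₀ * S₀ᴴ) * (H₁ * r) = H₁ * r - S₀ * S₀ᴴ * (H₁ * r) := by
    rw [Matrix.sub_mul, Matrix.one_mul]
  have q2 : r * H₁ * (1 - S₀ * S₀ᴴ) = r * H₁ - r * H₁ * (S₀ * S₀ᴴ) := by
    rw [Matrix.mul_sub, Matrix.mul_one]
  rw [hR1, hR2, q1, q2]
  module
end

section
/- Let n, m be finite types, S₀ : Matrix n m ℂ with S₀† * S₀ = 1, P₀ := S₀ * S₀†, and L₀ : Matrix n n ℂ with L₀ * S₀ = 0. Let X, H₁ : Matrix n n ℂ satisfy L₀† * L₀ * X = 1 − P₀ and X * P₀ = 0, and set C₁ := 2 * X * H₁ * P₀ + 2 * P₀ * H₁ * X. Then for every ρ : Matrix m m ℂ, L₀† * L₀ * (C₁ * (S₀ * ρ * S₀†) − (S₀ * ρ * S₀†) * C₁) = 2 * (1 − P₀) * H₁ * S₀ * ρ * S₀†. (Key computation in the proof of Lemma 2.) -/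
open Matrix

/-- Key computation in the proof of Lemma 2:
`L₀†L₀ [C₁, S₀ρS₀†] = 2(1 − P₀)H₁P₀ S₀ρS₀†`. -/
theorem L0L0_commutator_C1 {n m : Type*} [Fintype n] [Fintype m]
    [DecidableEq n] [DecidableEq m]
    (S₀ : Matrix n m ℂ) (hS₀ : S₀ᴴ * S₀ = 1)
    (L₀ : Matrix n n ℂ) (hL₀S₀ : L₀ * S₀ = 0)
    (X H₁ : Matrix n n ℂ)
    (hXinv : L₀ᴴ * L₀ * X = 1 - S₀ * S₀ᴴ)
    (hXP₀ : X * (S₀ * S₀ᴴ) = 0)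
    (ρ : Matrix m m ℂ) :
    (let P₀ := S₀ * S₀ᴴ
     let C₁ := 2 • (X * H₁ * P₀) + 2 • (P₀ * H₁ * X)
     L₀ᴴ * L₀ * (C₁ * (S₀ * ρ * S₀ᴴ) - (S₀ * ρ * S₀ᴴ) * C₁)
       = 2 • ((1 - P₀) * H₁ * S₀ * ρ * S₀ᴴ)) := by
  intro P₀ C₁
  have hSS : ∀ B : Matrix m n ℂ, S₀ᴴ * (S₀ * B) = B := by
    intro B; rw [← Matrix.mul_assoc, hS₀, Matrix.one_mul]
  have hLS : ∀ B : Matrix m n ℂ, L₀ * (S₀ * B) = 0 := by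
    intro B; rw [← Matrix.mul_assoc, hL₀S₀, Matrix.zero_mul]
  have hXB : ∀ B : Matrix n n ℂ, L₀ᴴ * (L₀ * (X * B)) = B - S₀ * (S₀ᴴ * B) := by
    intro B
    rw [← Matrix.mul_assoc, ← Matrix.mul_assoc, hXinv, Matrix.sub_mul,
      Matrix.one_mul, Matrix.mul_assoc]
  show L₀ᴴ * L₀ * ((2 • (X * H₁ * (S₀ * S₀ᴴ)) + 2 • (S₀ * S₀ᴴ * H₁ * X)) * (S₀ * ρ * S₀ᴴ)
      - (S₀ * ρ * S₀ᴴ) * (2 • (X * H₁ * (S₀ * S₀ᴴ)) + 2 • (S₀ * S₀ᴴ * H₁ * X)))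
      = 2 • ((1 - S₀ * S₀ᴴ) * H₁ * S₀ * ρ * S₀ᴴ)
  simp only [Matrix.mul_sub, Matrix.sub_mul, Matrix.mul_add, Matrix.add_mul,
    Matrix.smul_mul, Matrix.mul_smul, Matrix.mul_assoc, Matrix.one_mul,
    hSS, hLS, hXB, Matrix.mul_zero, smul_zero, add_zero, sub_zero, zero_sub]
end

section
/- Let n, m, ι be finite types, S₀ : Matrix n m ℂ with S₀† * S₀ = 1, P₀ := S₀ * S₀†, and (M_μ)_{μ∈ι} a family in Matrix n n ℂ such that for every A : Matrix n n ℂ, Σ_μ M_μ * (A * P₀) * M_μ† = P₀ * A * P₀ and Σ_μ M_μ * (P₀ * A) * M_μ† = P₀ * A * P₀. Let X, H₁ : Matrix n n ℂ with X * P₀ = 0 and P₀ * X = 0, and set C₁ := 2 * X * H₁ * P₀ + 2 * P₀ * H₁ * X. Then for every ρ : Matrix m m ℂ, writing T := S₀ * ((S₀† * H₁ * S₀) * ρ − ρ * (S₀† * H₁ * S₀)) * S₀†, one has Σ_μ M_μ * (C₁ * T − T * C₁) * M_μ† = 0. (The claim R(K₁(𝓛_{s,1}(ρ_s))) = 0 in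 the proof of Lemma 3.) -/
open Matrix

/-- The claim `R(K₁(𝓛_{s,1}(ρ_s))) = 0` in the proof of Lemma 3. -/
theorem R_K1_Ls1_vanishes {n m ι : Type*} [Fintype n] [Fintype m] [Fintype ι]
    [DecidableEq n] [DecidableEq m]
    (S₀ : Matrix n m ℂ) (hS₀ : S₀ᴴ * S₀ = 1)
    (M : ι → Matrix n n ℂ)
    (hRr : ∀ A : Matrix n n ℂ,
      ∑ μ, M μ * (A * (S₀ * S₀ᴴ)) * (M μ)ᴴ = (S₀ * S₀ᴴ) * A * (S₀ * S₀ᴴ))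
    (hRl : ∀ A : Matrix n n ℂ,
      ∑ μ, M μ * ((S₀ * S₀ᴴ) * A) * (M μ)ᴴ = (S₀ * S₀ᴴ) * A * (S₀ * S₀ᴴ))
    (X H₁ : Matrix n n ℂ)
    (hXP₀ : X * (S₀ * S₀ᴴ) = 0) (hP₀X : (S₀ * S₀ᴴ) * X = 0)
    (ρ : Matrix m m ℂ) :
    (let P₀ := S₀ * S₀ᴴ
     let C₁ := 2 • (X * H₁ * P₀) + 2 • (P₀ * H₁ * X)
     let T := S₀ * ((S₀ᴴ * H₁ * S₀) * ρ - ρ * (S₀ᴴ * H₁ * S₀)) * S₀ᴴ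
     ∑ μ, M μ * (C₁ * T - T * C₁) * (M μ)ᴴ = 0) := by
  intro P₀ C₁ T
  -- basic cancellation lemmas in right-associated form
  have l1 : ∀ N : Matrix m n ℂ, S₀ᴴ * (S₀ * N) = N := fun N => by
    rw [← Matrix.mul_assoc, hS₀, Matrix.one_mul]
  have hSX : S₀ᴴ * X = 0 := by
    have := congrArg (fun Y => S₀ᴴ * Y) hP₀X
    simpa [Matrix.mul_assoc, l1] using this
  have hXS : X * S₀ = 0 := by
    have := congrArg (fun Y => Y * S₀) hXP₀
    simpa [Matrix.mul_assoc, hS₀] using this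
  have l2 : ∀ N : Matrix n n ℂ, S₀ᴴ * (X * N) = 0 := fun N => by
    rw [← Matrix.mul_assoc, hSX, Matrix.zero_mul]
  have l3 : ∀ N : Matrix m n ℂ, X * (S₀ * N) = 0 := fun N => by
    rw [← Matrix.mul_assoc, hXS, Matrix.zero_mul]
  -- projector facts for T
  have hTP₀ : T * P₀ = T := by
    show S₀ * _ * S₀ᴴ * (S₀ * S₀ᴴ) = S₀ * _ * S₀ᴴ
    simp [Matrix.mul_assoc, l1]
  have hP₀T : P₀ * T = T := by
    show S₀ * S₀ᴴ * (S₀ * _ * S₀ᴴ) = S₀ * _ * S₀ᴴ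
    simp [Matrix.mul_assoc, l1]
  have hXT : X * T = 0 := by
    show X * (S₀ * _ * S₀ᴴ) = 0
    simp [Matrix.mul_assoc, l3]
  have hTX : T * X = 0 := by
    show S₀ * _ * S₀ᴴ * X = 0
    simp [Matrix.mul_assoc, hSX]
  -- simplify the commutator
  have hC₁T : C₁ * T - T * C₁ = 2 • (X * (H₁ * T)) - 2 • (T * H₁ * X) := by
    show (2 • (X * H₁ * P₀) + 2 • (P₀ * H₁ * X)) * T
        - T * (2 • (X * H₁ * P₀) + 2 • (P₀ * H₁ * X)) = _
    rw [Matrix.add_mul, Matrix.mul_add, Matrix.smul_mul, Matrix.smul_mul,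
      Matrix.mul_smul, Matrix.mul_smul]
    have e1 : X * H₁ * P₀ * T = X * (H₁ * T) := by
      rw [Matrix.mul_assoc (X * H₁), hP₀T, Matrix.mul_assoc]
    have e2 : P₀ * H₁ * X * T = 0 := by
      rw [Matrix.mul_assoc (P₀ * H₁), hXT, Matrix.mul_zero]
    have e3 : T * (X * H₁ * P₀) = 0 := by
      rw [Matrix.mul_assoc X H₁ P₀, ← Matrix.mul_assoc T X, hTX, Matrix.zero_mul]
    have e4 : T * (P₀ * H₁ * X) = T * H₁ * X := by
      rw [← Matrix.mul_assoc, ← Matrix.mul_assoc, hTP₀]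
    rw [e1, e2, e3, e4]
    simp
  -- the two pieces vanish under R
  have h1 : ∑ μ, M μ * (2 • (X * (H₁ * T))) * (M μ)ᴴ = 0 := by
    have key : (2 • (X * (H₁ * T))) = (2 • (X * (H₁ * T))) * P₀ := by
      rw [Matrix.smul_mul, Matrix.mul_assoc, Matrix.mul_assoc, hTP₀]
    rw [key, hRr]
    show S₀ * S₀ᴴ * (2 • (X * (H₁ * T))) * (S₀ * S₀ᴴ) = 0
    rw [Matrix.mul_smul, Matrix.smul_mul, Matrix.mul_assoc S₀ S₀ᴴ, l2,
      Matrix.mul_zero, Matrix.zero_mul, smul_zero]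
  have h2 : ∑ μ, M μ * (2 • (T * H₁ * X)) * (M μ)ᴴ = 0 := by
    have key : (2 • (T * H₁ * X)) = P₀ * (2 • (T * H₁ * X)) := by
      rw [Matrix.mul_smul, ← Matrix.mul_assoc, ← Matrix.mul_assoc, hP₀T]
    rw [key, hRl]
    show S₀ * S₀ᴴ * (2 • (T * H₁ * X)) * (S₀ * S₀ᴴ) = 0
    have : T * H₁ * X * (S₀ * S₀ᴴ) = 0 := by
      rw [Matrix.mul_assoc (T * H₁) X, hXP₀, Matrix.mul_zero]
    rw [Matrix.mul_assoc _ _ (S₀ * S₀ᴴ), Matrix.smul_mul, this, smul_zero,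
      Matrix.mul_zero]
  calc ∑ μ, M μ * (C₁ * T - T * C₁) * (M μ)ᴴ
      = ∑ μ, (M μ * (2 • (X * (H₁ * T))) * (M μ)ᴴ
          - M μ * (2 • (T * H₁ * X)) * (M μ)ᴴ) := by
        refine Finset.sum_congr rfl fun μ _ => ?_
        rw [hC₁T, Matrix.mul_sub, Matrix.sub_mul]
    _ = 0 := by rw [Finset.sum_sub_distrib, h1, h2, sub_zero]
end

section
/- Let n, ι be finite types, P₀, L₀, X : Matrix n n ℂ and (M_μ)_{μ∈ι} a family in Matrix n n ℂ; define R(A) := Σ_μ M_μ * A * M_μ†. Assume: (i) R(L₀ * B * L₀†) = (1/2) * R(L₀† * L₀ * B + B * L₀† * L₀) for all B (i.e. R annihilates the fast dissipator); (ii) R(B * P₀) = P₀ * B * P₀ and R(P₀ * B) = P₀ * B * P₀ for all B; (iii) L₀† * L₀ * X = 1 − P₀ and X * (L₀† * L₀) = 1 − P₀; (iv) X * P₀ = 0 and P₀ * X = 0. Then for every Y : Matrix n n ℂ, 2 * R(L₀ * X * Y * X * L₀†) = R(Y * X + X * Y). (Intermediate identity in the proof of Lemma 3, applied with Y = H₁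 S₀ρ_s S₀† H₁.) -/
open Matrix

/-- Intermediate identity in the proof of Lemma 3 (applied with `Y = H₁ S₀ρ_s S₀† H₁`):
`2 R(L₀ X Y X L₀†) = R(Y X + X Y)`. -/
theorem R_sandwich_identity {n ι : Type*} [Fintype n] [Fintype ι] [DecidableEq n]
    (P₀ L₀ X : Matrix n n ℂ)
    (M : ι → Matrix n n ℂ)
    (hRdiss : ∀ B : Matrix n n ℂ,
      ∑ μ, M μ * (L₀ * B * L₀ᴴ) * (M μ)ᴴ
        = (1 / 2 : ℂ) • (∑ μ, M μ * (L₀ᴴ * L₀ * B + B * (L₀ᴴ * L₀)) * (M μ)ᴴ))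
    (hRr : ∀ B : Matrix n n ℂ, ∑ μ, M μ * (B * P₀) * (M μ)ᴴ = P₀ * B * P₀)
    (hRl : ∀ B : Matrix n n ℂ, ∑ μ, M μ * (P₀ * B) * (M μ)ᴴ = P₀ * B * P₀)
    (hXinv : L₀ᴴ * L₀ * X = 1 - P₀)
    (hXinv' : X * (L₀ᴴ * L₀) = 1 - P₀)
    (hXP₀ : X * P₀ = 0) (hP₀X : P₀ * X = 0)
    (Y : Matrix n n ℂ) :
    2 • (∑ μ, M μ * (L₀ * X * Y * X * L₀ᴴ) * (M μ)ᴴ)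
      = ∑ μ, M μ * (Y * X + X * Y) * (M μ)ᴴ := by
  have h := hRdiss (X * Y * X)
  have e1 : L₀ᴴ * L₀ * (X * Y * X) = Y * X - P₀ * (Y * X) := by
    calc L₀ᴴ * L₀ * (X * Y * X) = (L₀ᴴ * L₀ * X) * (Y * X) := by
          simp only [mul_assoc]
      _ = Y * X - P₀ * (Y * X) := by rw [hXinv]; noncomm_ring
  have e2 : (X * Y * X) * (L₀ᴴ * L₀) = X * Y - (X * Y) * P₀ := by
    calc (X * Y * X) * (L₀ᴴ * L₀) = (X * Y) * (X * (L₀ᴴ * L₀)) := by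
          simp only [mul_assoc]
      _ = X * Y - (X * Y) * P₀ := by rw [hXinv']; noncomm_ring
  have e3 : L₀ᴴ * L₀ * (X * Y * X) + (X * Y * X) * (L₀ᴴ * L₀)
      = (Y * X + X * Y) - (P₀ * (Y * X) + (X * Y) * P₀) := by
    rw [e1, e2]; noncomm_ring
  rw [e3] at h
  have split : ∑ μ, M μ * ((Y * X + X * Y) - (P₀ * (Y * X) + (X * Y) * P₀)) * (M μ)ᴴ
      = ∑ μ, M μ * (Y * X + X * Y) * (M μ)ᴴ
        - (∑ μ, M μ * (P₀ * (Y * X)) * (M μ)ᴴ + ∑ μ, M μ * ((X * Y) * P₀) * (M μ)ᴴ) := by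
    rw [← Finset.sum_add_distrib, ← Finset.sum_sub_distrib]
    congr 1; ext μ; noncomm_ring
  have z1 : ∑ μ, M μ * (P₀ * (Y * X)) * (M μ)ᴴ = 0 := by
    rw [hRl]; calc P₀ * (Y * X) * P₀ = P₀ * Y * (X * P₀) := by simp only [mul_assoc]
      _ = 0 := by rw [hXP₀, mul_zero]
  have z2 : ∑ μ, M μ * ((X * Y) * P₀) * (M μ)ᴴ = 0 := by
    rw [hRr]; calc P₀ * (X * Y) * P₀ = (P₀ * X) * (Y * P₀) := by simp only [mul_assoc]
      _ = 0 := by rw [hP₀X, zero_mul]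
  rw [split, z1, z2] at h
  have harg : L₀ * X * Y * X * L₀ᴴ = L₀ * (X * Y * X) * L₀ᴴ := by
    simp only [mul_assoc]
  rw [harg, h]
  simp only [add_zero, sub_zero, two_smul]
  rw [← add_smul]
  norm_num
end

section
/- Let n, m, ι be finite types, S₀ : Matrix n m ℂ with S₀† * S₀ = 1, P₀ := S₀ * S₀†, L₀ : Matrix n n ℂ with L₀ * S₀ = 0, and (M_μ)_{μ∈ι} a family in Matrix n n ℂ; define R(A) := Σ_μ M_μ * A * M_μ†. Assume: R(L₀ * B * L₀† − (1/2)(L₀† * L₀ * B + B * L₀† * L₀)) = 0 for all B; R(B * P₀) = P₀ * B * P₀ and R(P₀ * B) = P₀ * B * P₀ for all B; Σ_μ M_μ† * P₀ * M_μ = 1. Let X : Matrix n n ℂ be Hermitian with L₀† * L₀ * X = X * (L₀† * L₀) = 1 − P₀ and X * P₀ = P₀ * X = 0, and let H₁ : Matrix n n ℂ be Hermitian. Define C₁ := 2XH₁P₀ + 2P₀H₁X, K₁(σ) := −i[C₁, S₀σS₀†], 𝓛_{s,1}(ρ) := −i[S₀†H₁S₀, ρ], 𝓛₁(A) := −i[H₁,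 A], and B_μ := 2 * S₀† * M_μ * L₀ * X * H₁ * S₀. Then for every ρ : Matrix m m ℂ, S₀† * R(𝓛₁(K₁(ρ)) − K₁(𝓛_{s,1}(ρ))) * S₀ = Σ_μ B_μ * ρ * B_μ† − (1/2) * ((Σ_μ B_μ† * B_μ) * ρ + ρ * (Σ_μ B_μ† * B_μ)). (Lemma 3: the second-order slow dynamics 𝓛_{s,2} admits a Lindbladian formulation with jump operators B_μ = 2S₀†M_μL₀(L₀†L₀)⁻¹H₁S₀.) -/
open Matrix

/-- Lemma 3: the second-order slow dynamics
`𝓛_{s,2}(ρ) = S₀† R(𝓛₁(K₁(ρ)) − K₁(𝓛_{s,1}(ρ))) S₀` admits a Lindbladian formulation with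
jump operators `B_μ = 2 S₀† M_μ L₀ (L₀†L₀)⁻¹ H₁ S₀`. -/
theorem second_order_lindblad {n m ι : Type*} [Fintype n] [Fintype m] [Fintype ι]
    [DecidableEq n] [DecidableEq m]
    (S₀ : Matrix n m ℂ) (hS₀ : S₀ᴴ * S₀ = 1)
    (L₀ : Matrix n n ℂ) (hL₀S₀ : L₀ * S₀ = 0)
    (M : ι → Matrix n n ℂ)
    (R : Matrix n n ℂ → Matrix n n ℂ)
    (hR : ∀ A : Matrix n n ℂ, R A = ∑ μ, M μ * A * (M μ)ᴴ)
    (hR𝓛₀ : ∀ B : Matrix n n ℂ,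
      R (L₀ * B * L₀ᴴ - (1 / 2 : ℂ) • (L₀ᴴ * L₀ * B + B * (L₀ᴴ * L₀))) = 0)
    (hRr : ∀ B : Matrix n n ℂ, R (B * (S₀ * S₀ᴴ)) = (S₀ * S₀ᴴ) * B * (S₀ * S₀ᴴ))
    (hRl : ∀ B : Matrix n n ℂ, R ((S₀ * S₀ᴴ) * B) = (S₀ * S₀ᴴ) * B * (S₀ * S₀ᴴ))
    (hRP₀ : ∑ μ, (M μ)ᴴ * (S₀ * S₀ᴴ) * M μ = 1)
    (X : Matrix n n ℂ) (hX : Xᴴ = X)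
    (hXinv : L₀ᴴ * L₀ * X = 1 - S₀ * S₀ᴴ)
    (hXinv' : X * (L₀ᴴ * L₀) = 1 - S₀ * S₀ᴴ)
    (hXP₀ : X * (S₀ * S₀ᴴ) = 0) (hP₀X : (S₀ * S₀ᴴ) * X = 0)
    (H₁ : Matrix n n ℂ) (hH₁ : H₁ᴴ = H₁)
    (C₁ : Matrix n n ℂ)
    (hC₁ : C₁ = 2 • (X * H₁ * (S₀ * S₀ᴴ)) + 2 • ((S₀ * S₀ᴴ) * H₁ * X))
    (K₁ : Matrix m m ℂ → Matrix n n ℂ)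
    (hK₁ : ∀ σ : Matrix m m ℂ,
      K₁ σ = (-Complex.I) • (C₁ * (S₀ * σ * S₀ᴴ) - (S₀ * σ * S₀ᴴ) * C₁))
    (𝓛s₁ : Matrix m m ℂ → Matrix m m ℂ)
    (h𝓛s₁ : ∀ σ : Matrix m m ℂ,
      𝓛s₁ σ = (-Complex.I) • ((S₀ᴴ * H₁ * S₀) * σ - σ * (S₀ᴴ * H₁ * S₀)))
    (𝓛₁ : Matrix n n ℂ → Matrix n n ℂ)
    (h𝓛₁ : ∀ A : Matrix n n ℂ, 𝓛₁ A = (-Complex.I) • (H₁ * A - A * H₁))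
    (B : ι → Matrix m m ℂ)
    (hB : ∀ μ, B μ = 2 • (S₀ᴴ * M μ * L₀ * X * H₁ * S₀))
    (ρ : Matrix m m ℂ) :
    S₀ᴴ * R (𝓛₁ (K₁ ρ) - K₁ (𝓛s₁ ρ)) * S₀
      = (∑ μ, B μ * ρ * (B μ)ᴴ)
        - (1 / 2 : ℂ) • ((∑ μ, (B μ)ᴴ * B μ) * ρ + ρ * (∑ μ, (B μ)ᴴ * B μ)) := by
  have hSL : S₀ᴴ * L₀ᴴ = 0 := by
    rw [← Matrix.conjTranspose_mul, hL₀S₀, Matrix.conjTranspose_zero]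
  have hXS : X * S₀ = 0 := by
    have h : X * (S₀ * S₀ᴴ) * S₀ = 0 := by rw [hXP₀, Matrix.zero_mul]
    rwa [Matrix.mul_assoc, Matrix.mul_assoc, hS₀, Matrix.mul_one] at h
  have hSX : S₀ᴴ * X = 0 := by
    have h : S₀ᴴ * ((S₀ * S₀ᴴ) * X) = 0 := by rw [hP₀X, Matrix.mul_zero]
    rwa [← Matrix.mul_assoc, ← Matrix.mul_assoc, hS₀, Matrix.one_mul] at h
  have e1n : ∀ (Z : Matrix m n ℂ), S₀ᴴ * (S₀ * Z) = Z := fun Z => by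
    rw [← Matrix.mul_assoc, hS₀, Matrix.one_mul]
  have e1m : ∀ (Z : Matrix m m ℂ), S₀ᴴ * (S₀ * Z) = Z := fun Z => by
    rw [← Matrix.mul_assoc, hS₀, Matrix.one_mul]
  have e2n : ∀ (Z : Matrix m n ℂ), X * (S₀ * Z) = 0 := fun Z => by
    rw [← Matrix.mul_assoc, hXS, Matrix.zero_mul]
  have e2m : ∀ (Z : Matrix m m ℂ), X * (S₀ * Z) = 0 := fun Z => by
    rw [← Matrix.mul_assoc, hXS, Matrix.zero_mul]
  have e3n : ∀ (Z : Matrix n n ℂ), S₀ᴴ * (X * Z) = 0 := fun Z => by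
    rw [← Matrix.mul_assoc, hSX, Matrix.zero_mul]
  have e3m : ∀ (Z : Matrix n m ℂ), S₀ᴴ * (X * Z) = 0 := fun Z => by
    rw [← Matrix.mul_assoc, hSX, Matrix.zero_mul]
  have e4 : ∀ (Z : Matrix n n ℂ), L₀ᴴ * (L₀ * (X * Z)) = Z - S₀ * (S₀ᴴ * Z) := fun Z => by
    calc L₀ᴴ * (L₀ * (X * Z)) = (L₀ᴴ * L₀ * X) * Z := by
          rw [Matrix.mul_assoc, Matrix.mul_assoc]
      _ = Z - S₀ * (S₀ᴴ * Z) := by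
          rw [hXinv, Matrix.sub_mul, Matrix.one_mul, Matrix.mul_assoc]
  have hRadd : ∀ A B : Matrix n n ℂ, R (A + B) = R A + R B := fun A B => by
    simp [hR, mul_add, add_mul, Finset.sum_add_distrib]
  have hRsub : ∀ A B : Matrix n n ℂ, R (A - B) = R A - R B := fun A B => by
    simp [hR, mul_sub, sub_mul, Finset.sum_sub_distrib]
  have hRsmul : ∀ (c : ℂ) (A : Matrix n n ℂ), R (c • A) = c • R A := fun c A => by
    simp [hR, mul_smul_comm, smul_mul_assoc, Finset.smul_sum]
  have hD : 𝓛₁ (K₁ ρ) - K₁ (𝓛s₁ ρ)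
      = (2:ℂ) • (L₀ᴴ * L₀ * (X * H₁ * (S₀ * ρ * S₀ᴴ) * H₁ * X)
            + (X * H₁ * (S₀ * ρ * S₀ᴴ) * H₁ * X) * (L₀ᴴ * L₀))
        - (2:ℂ) • ((H₁ * X * H₁ - X * H₁ * (S₀ * S₀ᴴ) * H₁) * (S₀ * ρ * S₀ᴴ)
            + (S₀ * ρ * S₀ᴴ) * (H₁ * X * H₁ - H₁ * (S₀ * S₀ᴴ) * H₁ * X)) := by
    rw [h𝓛₁, hK₁, hK₁, h𝓛s₁, hC₁]
    simp only [two_nsmul, Matrix.mul_add, Matrix.add_mul, Matrix.mul_sub, Matrix.sub_mul,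
      Matrix.neg_mul, Matrix.mul_neg, Matrix.smul_mul, Matrix.mul_smul,
      smul_add, smul_sub, smul_neg, neg_add, neg_neg, neg_smul, smul_smul,
      Matrix.mul_assoc, e1n, e1m, e2n, e2m,
      e3n, e3m, e4, hXinv', Matrix.mul_zero, Matrix.zero_mul, smul_zero, zero_add,
      add_zero, Matrix.mul_one, Matrix.one_mul, neg_zero, sub_zero, zero_sub,
      Complex.I_mul_I]
    match_scalars <;> simp [Complex.I_sq] <;> ring
  have e4m : ∀ (Z : Matrix n m ℂ), L₀ᴴ * (L₀ * (X * Z)) = Z - S₀ * (S₀ᴴ * Z) := fun Z => by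
    calc L₀ᴴ * (L₀ * (X * Z)) = (L₀ᴴ * L₀ * X) * Z := by
          rw [Matrix.mul_assoc, Matrix.mul_assoc]
      _ = Z - S₀ * (S₀ᴴ * Z) := by
          rw [hXinv, Matrix.sub_mul, Matrix.one_mul, Matrix.mul_assoc]
  have h0 := hR𝓛₀ (X * H₁ * (S₀ * ρ * S₀ᴴ) * H₁ * X)
  rw [hRsub, hRsmul, sub_eq_zero] at h0
  have key : R (L₀ᴴ * L₀ * (X * H₁ * (S₀ * ρ * S₀ᴴ) * H₁ * X)
        + (X * H₁ * (S₀ * ρ * S₀ᴴ) * H₁ * X) * (L₀ᴴ * L₀))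
      = (2:ℂ) • R (L₀ * (X * H₁ * (S₀ * ρ * S₀ᴴ) * H₁ * X) * L₀ᴴ) := by
    rw [h0, smul_smul]; norm_num
  have hEρ : R ((H₁ * X * H₁ - X * H₁ * (S₀ * S₀ᴴ) * H₁) * (S₀ * ρ * S₀ᴴ))
      = (S₀ * S₀ᴴ) * ((H₁ * X * H₁ - X * H₁ * (S₀ * S₀ᴴ) * H₁) * (S₀ * ρ * S₀ᴴ)) * (S₀ * S₀ᴴ) := by
    have h : (H₁ * X * H₁ - X * H₁ * (S₀ * S₀ᴴ) * H₁) * (S₀ * ρ * S₀ᴴ)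
        = ((H₁ * X * H₁ - X * H₁ * (S₀ * S₀ᴴ) * H₁) * (S₀ * ρ * S₀ᴴ)) * (S₀ * S₀ᴴ) := by
      simp only [Matrix.mul_assoc, e1n, e1m]
    conv_lhs => rw [h]
    rw [hRr]
  have hρF : R ((S₀ * ρ * S₀ᴴ) * (H₁ * X * H₁ - H₁ * (S₀ * S₀ᴴ) * H₁ * X))
      = (S₀ * S₀ᴴ) * ((S₀ * ρ * S₀ᴴ) * (H₁ * X * H₁ - H₁ * (S₀ * S₀ᴴ) * H₁ * X)) * (S₀ * S₀ᴴ) := by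
    have h : (S₀ * ρ * S₀ᴴ) * (H₁ * X * H₁ - H₁ * (S₀ * S₀ᴴ) * H₁ * X)
        = (S₀ * S₀ᴴ) * ((S₀ * ρ * S₀ᴴ) * (H₁ * X * H₁ - H₁ * (S₀ * S₀ᴴ) * H₁ * X)) := by
      simp only [Matrix.mul_assoc, e1n, e1m]
    conv_lhs => rw [h]
    rw [hRl]
  have hBρB : (∑ μ, B μ * ρ * (B μ)ᴴ)
      = (4:ℂ) • (S₀ᴴ * R (L₀ * (X * H₁ * (S₀ * ρ * S₀ᴴ) * H₁ * X) * L₀ᴴ) * S₀) := by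
    rw [hR, Matrix.mul_sum, Matrix.sum_mul, Finset.smul_sum]
    refine Finset.sum_congr rfl fun μ _ => ?_
    rw [hB]
    simp only [two_nsmul, conjTranspose_add, Matrix.conjTranspose_mul, hX, hH₁,
      conjTranspose_conjTranspose, Matrix.add_mul, Matrix.mul_add, Matrix.mul_assoc, smul_add]
    match_scalars <;> ring
  have hBB : (∑ μ, (B μ)ᴴ * B μ) = (4:ℂ) • (S₀ᴴ * H₁ * X * H₁ * S₀) := by
    have step : ∀ μ : ι, (B μ)ᴴ * B μ
        = (4:ℂ) • (S₀ᴴ * H₁ * X * L₀ᴴ * ((M μ)ᴴ * (S₀ * S₀ᴴ) * M μ) * (L₀ * X * H₁ * S₀)) := fun μ => by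
      rw [hB]
      simp only [two_nsmul, conjTranspose_add, Matrix.conjTranspose_mul, hX, hH₁,
        conjTranspose_conjTranspose, Matrix.add_mul, Matrix.mul_add, Matrix.mul_assoc, smul_add]
      match_scalars <;> ring
    simp only [step]
    rw [← Finset.smul_sum]
    congr 1
    rw [← Matrix.sum_mul, ← Matrix.mul_sum, hRP₀, Matrix.mul_one]
    simp only [Matrix.mul_assoc, e4m, Matrix.mul_sub, e2m, Matrix.mul_zero, sub_zero]
  rw [hD, hRsub, hRsmul, hRsmul, key, hRadd, hEρ, hρF, hBρB, hBB]
  simp only [Matrix.mul_add, Matrix.add_mul, Matrix.mul_sub, Matrix.sub_mul,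
    Matrix.mul_smul, Matrix.smul_mul, smul_add, smul_sub, smul_smul,
    Matrix.mul_assoc, e1n, e1m, e2n, e2m, e3n, e3m, hS₀, Matrix.mul_one, Matrix.one_mul,
    Matrix.mul_zero, Matrix.zero_mul, smul_zero, zero_add, add_zero, sub_zero, zero_sub]
  match_scalars <;> ring
end

section
/- Let n be a finite type, c : n → ℂ a unit vector (Σ_k |c k|² = 1), and (M_μ)_{μ∈ι} a finite family of matrices in Matrix n n ℂ such that Σ_μ M_μ * (c ⬝ c†) * M_μ† = c ⬝ c†, where c ⬝ c† denotes the rank-one outer product (vecMulVec c (star ∘ c)). Then there exist complex numbers λ_μ such that M_μ.mulVec c = λ_μ • c for every μ, and Σ_μ |λ_μ|² = 1. (Equation (eq:MmuC): every Kraus operator of a completely positive map fixing a pure state admits that state as an eigenvector.) -/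
open Matrix

/-- Equation (eq:MmuC): every Kraus operator of a completely positive map fixing the pure
state `|c⟩⟨c|` admits the unit vector `c` as an eigenvector, with eigenvalues of unit total
square modulus. -/
theorem kraus_fixes_pure_state {n ι : Type*} [Fintype n] [Fintype ι] [DecidableEq n]
    (c : n → ℂ) (hc : ∑ k, ‖c k‖ ^ 2 = 1)
    (M : ι → Matrix n n ℂ)
    (hfix : ∑ μ, M μ * Matrix.vecMulVec c (star ∘ c) * (M μ)ᴴ
      = Matrix.vecMulVec c (star ∘ c)) :
    ∃ lam : ι → ℂ,
      (∀ μ, (M μ).mulVec c = lam μ • c) ∧ ∑ μ, ‖lam μ‖ ^ 2 = 1 := by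
  classical
  set v : ι → n → ℂ := fun μ => (M μ).mulVec c with hv
  -- key entrywise identity
  have key : ∀ μ i j, (M μ * Matrix.vecMulVec c (star ∘ c) * (M μ)ᴴ) i j
      = v μ i * starRingEnd ℂ (v μ j) := by
    intro μ i j
    simp only [Matrix.mul_apply, vecMulVec_apply, conjTranspose_apply, Function.comp,
      hv, mulVec, dotProduct, Complex.star_def, map_sum, _root_.map_mul]
    rw [Finset.sum_mul_sum]
    rw [Finset.sum_comm]
    apply Finset.sum_congr rfl; intro k _
    rw [Finset.sum_mul]
    apply Finset.sum_congr rfl; intro l _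
    ring
  have hent : ∀ i j, ∑ μ, v μ i * starRingEnd ℂ (v μ j) = c i * starRingEnd ℂ (c j) := by
    intro i j
    have h := congrFun (congrFun hfix i) j
    rw [Matrix.sum_apply] at h
    simp only [key] at h
    simpa [vecMulVec_apply, Complex.star_def] using h
  have hT : ∑ i, c i * starRingEnd ℂ (c i) = 1 := by
    have : ∀ i, c i * starRingEnd ℂ (c i) = ((‖c i‖ ^ 2 : ℝ) : ℂ) := by
      intro i; rw [Complex.mul_conj, Complex.sq_norm]
    rw [Finset.sum_congr rfl fun i _ => this i, ← Complex.ofReal_sum, hc, Complex.ofReal_one]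
  set lam : ι → ℂ := fun μ => ∑ j, starRingEnd ℂ (c j) * v μ j with hlam
  -- workhorse
  have hBD : ∀ f g : n → ℂ,
      (∑ μ, (∑ i, f i * v μ i) * (∑ j, g j * starRingEnd ℂ (v μ j)))
        = (∑ i, f i * c i) * (∑ j, g j * starRingEnd ℂ (c j)) := by
    intro f g
    have step : ∀ μ, (∑ i, f i * v μ i) * (∑ j, g j * starRingEnd ℂ (v μ j))
        = ∑ i, ∑ j, f i * g j * (v μ i * starRingEnd ℂ (v μ j)) := by
      intro μ
      rw [Finset.sum_mul_sum]
      exact Finset.sum_congr rfl fun i _ => Finset.sum_congr rfl fun j _ => by ring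
    rw [Finset.sum_congr rfl fun μ _ => step μ, Finset.sum_comm]
    rw [Finset.sum_mul_sum]
    apply Finset.sum_congr rfl; intro i _
    rw [Finset.sum_comm]
    apply Finset.sum_congr rfl; intro j _
    rw [← Finset.mul_sum, hent]
    ring
  have hL : ∑ μ, lam μ * starRingEnd ℂ (lam μ) = 1 := by
    have : ∀ μ, lam μ * starRingEnd ℂ (lam μ)
        = (∑ i, starRingEnd ℂ (c i) * v μ i) * (∑ j, c j * starRingEnd ℂ (v μ j)) := by
      intro μ
      simp only [hlam, map_sum, _root_.map_mul, Complex.conj_conj]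
    rw [Finset.sum_congr rfl fun μ _ => this μ, hBD]
    have h1 : ∑ i, starRingEnd ℂ (c i) * c i = 1 := by
      rw [← hT]; exact Finset.sum_congr rfl fun i _ => mul_comm _ _
    rw [h1, hT, one_mul]
  -- total deficiency is zero
  have hzero : ∑ μ, ∑ i, (v μ i - lam μ * c i) * starRingEnd ℂ (v μ i - lam μ * c i) = 0 := by
    have expand : ∀ μ, ∑ i, (v μ i - lam μ * c i) * starRingEnd ℂ (v μ i - lam μ * c i)
        = (∑ i, v μ i * starRingEnd ℂ (v μ i))
          - starRingEnd ℂ (lam μ) * lam μ - lam μ * starRingEnd ℂ (lam μ)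
          + lam μ * starRingEnd ℂ (lam μ) * ∑ i, c i * starRingEnd ℂ (c i) := by
      intro μ
      have hlam' : (∑ i, v μ i * starRingEnd ℂ (c i)) = lam μ := by
        rw [hlam]; exact Finset.sum_congr rfl fun i _ => mul_comm _ _
      have hclam : (∑ i, c i * starRingEnd ℂ (v μ i)) = starRingEnd ℂ (lam μ) := by
        simp only [hlam, map_sum, _root_.map_mul, Complex.conj_conj]
      have e1 : ∑ i, (v μ i - lam μ * c i) * starRingEnd ℂ (v μ i - lam μ * c i)
          = (∑ i, v μ i * starRingEnd ℂ (v μ i))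
            - starRingEnd ℂ (lam μ) * (∑ i, v μ i * starRingEnd ℂ (c i))
            - lam μ * (∑ i, c i * starRingEnd ℂ (v μ i))
            + lam μ * starRingEnd ℂ (lam μ) * ∑ i, c i * starRingEnd ℂ (c i) := by
        simp only [map_sub, _root_.map_mul, Finset.mul_sum, ← Finset.sum_sub_distrib,
          ← Finset.sum_add_distrib]
        exact Finset.sum_congr rfl fun i _ => by ring
      rw [e1, hlam', hclam]
    rw [Finset.sum_congr rfl fun μ _ => expand μ]
    rw [Finset.sum_add_distrib, Finset.sum_sub_distrib, Finset.sum_sub_distrib]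
    have hA : ∑ μ, ∑ i, v μ i * starRingEnd ℂ (v μ i) = 1 := by
      rw [Finset.sum_comm]
      rw [Finset.sum_congr rfl fun i _ => hent i i, hT]
    have hL' : ∑ μ, starRingEnd ℂ (lam μ) * lam μ = 1 := by
      rw [← hL]; exact Finset.sum_congr rfl fun μ _ => mul_comm _ _
    rw [hA, hL', ← Finset.sum_mul, hL, hT]
    ring
  -- convert to real and conclude each term vanishes
  have hreal : ∑ μ, ∑ i, Complex.normSq (v μ i - lam μ * c i) = 0 := by
    have h := hzero
    simp only [Complex.mul_conj] at h
    exact_mod_cast h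
  have hvanish : ∀ μ i, v μ i - lam μ * c i = 0 := by
    intro μ i
    have h1 : ∀ μ ∈ Finset.univ, (0:ℝ) ≤ ∑ i, Complex.normSq (v μ i - lam μ * c i) :=
      fun μ _ => Finset.sum_nonneg fun i _ => Complex.normSq_nonneg _
    have h2 := (Finset.sum_eq_zero_iff_of_nonneg h1).mp hreal μ (Finset.mem_univ μ)
    have h3 := (Finset.sum_eq_zero_iff_of_nonneg
      (fun i _ => Complex.normSq_nonneg _)).mp h2 i (Finset.mem_univ i)
    exact Complex.normSq_eq_zero.mp h3
  refine ⟨lam, fun μ => ?_, ?_⟩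
  · funext i
    have := hvanish μ i
    simpa [hv, Pi.smul_apply, smul_eq_mul, sub_eq_zero] using this
  · have : ∀ μ, lam μ * starRingEnd ℂ (lam μ) = ((‖lam μ‖ ^ 2 : ℝ) : ℂ) := by
      intro μ; rw [Complex.mul_conj, Complex.sq_norm]
    rw [Finset.sum_congr rfl fun μ _ => this μ, ← Complex.ofReal_sum] at hL
    exact_mod_cast hL
end

section
/- Let n, ι be finite types, P₀ : Matrix n n ℂ, and (M_μ)_{μ∈ι} a family in Matrix n n ℂ such that Σ_μ M_μ† * M_μ = 1 and P₀ * (Σ_μ M_μ * ρ * M_μ†) = Σ_μ M_μ * ρ * M_μ† for every ρ : Matrix n n ℂ. Then Σ_μ M_μ† * P₀ * M_μ = 1. (Equation (eq:RP0): the adjoint of the limit Kraus map sends the projector P₀ onto the decoherence-free subspace to the identity, R*(P₀) = I.) -/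
open Matrix

private lemma trace_stdBasisMatrix_mul {n : Type*} [Fintype n] [DecidableEq n]
    (A : Matrix n n ℂ) (i j : n) :
    trace (single j i 1 * A) = A i j := by
  simp [Matrix.trace, Matrix.diag, Matrix.mul_apply, Matrix.single, ite_and]

/-- Equation (eq:RP0): the adjoint of the trace-preserving limit Kraus map, whose range is
supported in the range of the projector `P₀`, sends `P₀` to the identity: `R*(P₀) = I`. -/
theorem adjoint_limit_map_P0_eq_one {n ι : Type*} [Fintype n] [Fintype ι] [DecidableEq n]
    (P₀ : Matrix n n ℂ)
    (M : ι → Matrix n n ℂ)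
    (hTP : ∑ μ, (M μ)ᴴ * M μ = 1)
    (hsupp : ∀ ρ : Matrix n n ℂ,
      P₀ * (∑ μ, M μ * ρ * (M μ)ᴴ) = ∑ μ, M μ * ρ * (M μ)ᴴ) :
    ∑ μ, (M μ)ᴴ * P₀ * M μ = 1 := by
  have key : ∀ ρ : Matrix n n ℂ,
      trace (ρ * ∑ μ, (M μ)ᴴ * P₀ * M μ) = trace (ρ * ∑ μ, (M μ)ᴴ * M μ) := by
    intro ρ
    have h1 : trace (ρ * ∑ μ, (M μ)ᴴ * P₀ * M μ)
        = trace (P₀ * ∑ μ, M μ * ρ * (M μ)ᴴ) := by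
      rw [Finset.mul_sum, trace_sum, Finset.mul_sum, trace_sum]
      congr 1; ext μ
      rw [show ρ * ((M μ)ᴴ * P₀ * M μ) = ρ * (M μ)ᴴ * (P₀ * M μ) by simp only [mul_assoc],
        trace_mul_comm, show P₀ * M μ * (ρ * (M μ)ᴴ) = P₀ * (M μ * ρ * (M μ)ᴴ) by simp only [mul_assoc]]
    have h2 : trace (∑ μ, M μ * ρ * (M μ)ᴴ)
        = trace (ρ * ∑ μ, (M μ)ᴴ * M μ) := by
      rw [trace_sum, Finset.mul_sum, trace_sum]
      congr 1; ext μ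
      rw [show M μ * ρ * (M μ)ᴴ = M μ * (ρ * (M μ)ᴴ) by simp only [mul_assoc], trace_mul_comm,
        show ρ * (M μ)ᴴ * M μ = ρ * ((M μ)ᴴ * M μ) by simp only [mul_assoc]]
    rw [h1, hsupp, h2]
  ext i j
  have := key (single j i 1)
  rwa [trace_stdBasisMatrix_mul, trace_stdBasisMatrix_mul, hTP] at this
end

section
/- Let 𝓛 be a continuous linear endomorphism of Matrix n n ℂ (n a finite type) and R : Matrix n n ℂ → Matrix n n ℂ a map such that for every x, exp(t • 𝓛) x tends to R x as the real parameter t tends to +∞. Then R (R x) = R x for every x, i.e. R is idempotent. (The limit map R is a projection onto the stationary manifold of the fast dynamics.) -/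
attribute [local instance] Matrix.normedAddCommGroup Matrix.normedSpace

/-- The limit map `R` of the semigroup generated by `𝓛` is idempotent: it is a projection
onto the stationary manifold of the fast dynamics. -/
theorem limit_map_idempotent {n : Type*} [Fintype n] [DecidableEq n]
    (𝓛 : Matrix n n ℂ →L[ℂ] Matrix n n ℂ)
    (R : Matrix n n ℂ → Matrix n n ℂ)
    (hconv : ∀ x : Matrix n n ℂ,
      Filter.Tendsto (fun t : ℝ => @NormedSpace.exp _ _ _
        (letI : NormedRing (Matrix n n ℂ →L[ℂ] Matrix n n ℂ) := ContinuousLinearMap.toNormedRing;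
          NonUnitalSeminormedRing.toIsTopologicalRing) (t • 𝓛) x)
        Filter.atTop (nhds (R x)))
    (x : Matrix n n ℂ) :
    R (R x) = R x := by
  letI : NormedRing (Matrix n n ℂ →L[ℂ] Matrix n n ℂ) := ContinuousLinearMap.toNormedRing
  letI : IsTopologicalRing (Matrix n n ℂ →L[ℂ] Matrix n n ℂ) :=
    NonUnitalSeminormedRing.toIsTopologicalRing
  -- Step 1: for each s, exp(s•𝓛) (R x) = R x.
  have key : ∀ s : ℝ, NormedSpace.exp (s • 𝓛) (R x) = R x := by
    intro s
    have h1 : Filter.Tendsto (fun t : ℝ => NormedSpace.exp (s • 𝓛)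
        (NormedSpace.exp (t • 𝓛) x)) Filter.atTop
        (nhds (NormedSpace.exp (s • 𝓛) (R x))) :=
      ((NormedSpace.exp (s • 𝓛)).continuous.tendsto _).comp (hconv x)
    have h2 : Filter.Tendsto (fun t : ℝ => NormedSpace.exp (s • 𝓛)
        (NormedSpace.exp (t • 𝓛) x)) Filter.atTop (nhds (R x)) := by
      have heq : ∀ t : ℝ, NormedSpace.exp (s • 𝓛) (NormedSpace.exp (t • 𝓛) x)
          = NormedSpace.exp ((s + t) • 𝓛) x := by
        intro t
        have hc : Commute (s • 𝓛) (t • 𝓛) := by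
          show (s • 𝓛) * (t • 𝓛) = (t • 𝓛) * (s • 𝓛)
          ext m
          simp [ContinuousLinearMap.mul_apply, smul_comm s t]; ring
        letI : NormedAlgebra ℂ (Matrix n n ℂ →L[ℂ] Matrix n n ℂ) :=
          ContinuousLinearMap.toNormedAlgebra
        letI : NormedAlgebra ℚ (Matrix n n ℂ →L[ℂ] Matrix n n ℂ) :=
          NormedAlgebra.restrictScalars ℚ ℂ _
        have hcs : CompleteSpace (Matrix n n ℂ →L[ℂ] Matrix n n ℂ) := FiniteDimensional.complete ℂ _
        have := @NormedSpace.exp_add_of_commute _ _ _ hcs _ _ hc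
        have hadd : (s + t) • 𝓛 = s • 𝓛 + t • 𝓛 := by
          exact add_smul s t 𝓛
        rw [hadd]
        exact (congrArg (fun f => f x) this).symm
      simp only [heq]
      have hshift : Filter.Tendsto (fun t : ℝ => s + t) Filter.atTop Filter.atTop :=
        Filter.tendsto_atTop_add_const_left _ s Filter.tendsto_id
      exact (hconv x).comp hshift
    exact tendsto_nhds_unique h1 h2
  have h3 : Filter.Tendsto (fun t : ℝ => NormedSpace.exp (t • 𝓛) (R x))
      Filter.atTop (nhds (R x)) := by
    simp only [key]
    exact tendsto_const_nhds
  exact tendsto_nhds_unique (hconv (R x)) h3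
end
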